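/- Say that M ∈ SL_2(ℤ) satisfies property 𝒫 if, for every k ≥ 1 and every k-tuple of strictly positive integers (a_1,…,a_k) with M_k(a_1,…,a_k) = M, every cyclic permutation (a_{j+1},…,a_k,a_1,…,a_j) also satisfies M_k(a_{j+1},…,a_k,a_1,…,a_j) = M. Then M satisfies 𝒫 if and only if M = Id or M = −Id. -/

import Mathlib

/-- The elementary matrix `[[a, -1], [1, 0]]`. -/
def genMat (a : ℤ) : Matrix (Fin 2) (Fin 2) ℤ := !![a, -1; 1, 0]

/-- `Mprod [a₁, …, aₙ] = [[aₙ,-1],[1,0]] ⋯ [[a₁,-1],[1,0]]`. -/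
def Mprod (l : List ℤ) : Matrix (Fin 2) (Fin 2) ℤ := ((l.map genMat).reverse).prod

lemma Mprod_append (a b : List ℤ) : Mprod (a ++ b) = Mprod b * Mprod a := by
  simp [Mprod]

lemma Mprod_singleton (a : ℤ) : Mprod [a] = genMat a := by simp [Mprod]

lemma Mprod_det (l : List ℤ) : (Mprod l).det = 1 := by
  induction l with
  | nil => simp [Mprod]
  | cons a t ih =>
    have : Mprod (a :: t) = Mprod t * genMat a := by
      simpa [Mprod_singleton] using Mprod_append [a] t
    rw [this, Matrix.det_mul, ih]
    simp [genMat, Matrix.det_fin_two_of]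

lemma cancel_right {A B C : Matrix (Fin 2) (Fin 2) ℤ} (hC : C.det = 1)
    (h : A * C = B * C) : A = B := by
  have hu : IsUnit C := (Matrix.isUnit_iff_isUnit_det C).2 (by simp [hC])
  exact hu.mul_right_cancel h

lemma Mprod_rotate (l : List ℤ) (j : ℕ) (hj : j ≤ l.length) :
    Mprod (l.rotate j) * Mprod (l.take j) = Mprod (l.take j) * Mprod l := by
  have h : Mprod l = Mprod (l.drop j) * Mprod (l.take j) := by
    conv_lhs => rw [← List.take_append_drop j l]
    rw [Mprod_append]
  rw [List.rotate_eq_drop_append_take hj, Mprod_append, h, mul_assoc]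

open ModularGroup in
/-- `A` has a positive presentation. -/
def Qpos (A : Matrix.SpecialLinearGroup (Fin 2) ℤ) : Prop :=
  ∃ l : List ℤ, (∀ x ∈ l, 0 < x) ∧ Mprod l = (A : Matrix (Fin 2) (Fin 2) ℤ)

lemma Qpos_mul {A B : Matrix.SpecialLinearGroup (Fin 2) ℤ} (hA : Qpos A) (hB : Qpos B) :
    Qpos (A * B) := by
  obtain ⟨la, hpa, ha⟩ := hA
  obtain ⟨lb, hpb, hb⟩ := hB
  refine ⟨lb ++ la, ?_, ?_⟩
  · intro x hx
    rcases List.mem_append.1 hx with h | h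
    · exact hpb x h
    · exact hpa x h
  · rw [Mprod_append, ha, hb, Matrix.SpecialLinearGroup.coe_mul]

lemma Qpos_one : Qpos 1 := ⟨[1,1,1,1,1,1], by decide, by decide⟩
lemma Qpos_neg_one : Qpos (-1) := ⟨[1,1,1], by decide, by decide⟩
lemma Qpos_T : Qpos ModularGroup.T := ⟨[1,1,1,1,1,2], by decide, by decide⟩

def Tinv : Matrix.SpecialLinearGroup (Fin 2) ℤ := ⟨!![1,-1;0,1], by decide⟩
def Sinv : Matrix.SpecialLinearGroup (Fin 2) ℤ := ⟨!![0,1;-1,0], by decide⟩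

lemma Tinv_eq : ModularGroup.T⁻¹ = Tinv :=
  inv_eq_of_mul_eq_one_right (Subtype.ext (by decide))

lemma Sinv_eq : ModularGroup.S⁻¹ = Sinv :=
  inv_eq_of_mul_eq_one_right (Subtype.ext (by decide))

lemma Qpos_Tinv : Qpos (ModularGroup.T⁻¹) := by
  rw [Tinv_eq]; exact ⟨[1,1,1,1,2,1,1], by decide, by decide⟩

lemma Qpos_Sinv : Qpos (ModularGroup.S⁻¹) := by
  rw [Sinv_eq]; exact ⟨[1,1,2,1,1], by decide, by decide⟩

lemma Qpos_T_zpow (n : ℤ) : Qpos (ModularGroup.T ^ n) := by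
  induction n using Int.induction_on with
  | zero => simpa using Qpos_one
  | succ k ih => rw [zpow_add_one]; exact Qpos_mul ih Qpos_T
  | pred k ih => rw [zpow_sub_one]; exact Qpos_mul ih Qpos_Tinv

lemma Qpos_all (M : Matrix.SpecialLinearGroup (Fin 2) ℤ) : Qpos M := by
  suffices H : ∀ n : ℕ, ∀ M : Matrix.SpecialLinearGroup (Fin 2) ℤ,
      ((M : Matrix (Fin 2) (Fin 2) ℤ) 1 0).natAbs = n → Qpos M from H _ M rfl
  intro n
  induction n using Nat.strong_induction_on with
  | _ n IH =>
    intro M hn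
    by_cases hc : (M : Matrix (Fin 2) (Fin 2) ℤ) 1 0 = 0
    · -- upper triangular
      have hdet := M.2
      rw [Matrix.det_fin_two] at hdet
      rw [hc, mul_zero, sub_zero] at hdet
      rcases Int.eq_one_or_neg_one_of_mul_eq_one' hdet with ⟨ha, hd⟩ | ⟨ha, hd⟩
      · have hMeq : M = ModularGroup.T ^ ((M : Matrix (Fin 2) (Fin 2) ℤ) 0 1) := by
          apply Subtype.ext
          rw [ModularGroup.coe_T_zpow]
          ext i j
          fin_cases i <;> fin_cases j <;> simp [ha, hd, hc]
        rw [hMeq]; exact Qpos_T_zpow _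
      · have hMeq : M = -ModularGroup.T ^ (-((M : Matrix (Fin 2) (Fin 2) ℤ) 0 1)) := by
          apply Subtype.ext
          rw [Matrix.SpecialLinearGroup.coe_neg, ModularGroup.coe_T_zpow]
          ext i j
          fin_cases i <;> fin_cases j <;> simp [ha, hd, hc]
        rw [hMeq, ← neg_one_mul]
        exact Qpos_mul Qpos_neg_one (Qpos_T_zpow _)
    · set c : ℤ := (M : Matrix (Fin 2) (Fin 2) ℤ) 1 0 with hcdef
      set a : ℤ := (M : Matrix (Fin 2) (Fin 2) ℤ) 0 0 with hadef
      set n0 : ℤ := -(a / c) with hn0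
      set M' := ModularGroup.S * ModularGroup.T ^ n0 * M with hM'
      have hentry : (M' : Matrix (Fin 2) (Fin 2) ℤ) 1 0 = a % c := by
        rw [hM', Matrix.SpecialLinearGroup.coe_mul, Matrix.SpecialLinearGroup.coe_mul,
          ModularGroup.coe_S, ModularGroup.coe_T_zpow]
        simp [Matrix.mul_apply, Fin.sum_univ_two, hn0, Int.emod_def]
        ring
      have hlt : ((M' : Matrix (Fin 2) (Fin 2) ℤ) 1 0).natAbs < n := by
        rw [hentry, ← hn]
        have h1 : 0 ≤ a % c := Int.emod_nonneg a hc
        have h2 : a % c < |c| := by rw [Int.abs_eq_natAbs]; exact Int.emod_lt a hc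
        rw [Int.abs_eq_natAbs] at h2
        omega
      have hQ' : Qpos M' := IH _ hlt M' rfl
      have hMeq : M = ModularGroup.T ^ (-n0) * (ModularGroup.S⁻¹ * M') := by
        rw [hM', zpow_neg]; group
      rw [hMeq]
      exact Qpos_mul (Qpos_T_zpow _) (Qpos_mul Qpos_Sinv hQ')

/-- `M ∈ SL₂(ℤ)` has its positive presentations invariant under all cyclic
permutations if and only if `M = Id` or `M = -Id`. -/
theorem stmt5 (M : Matrix.SpecialLinearGroup (Fin 2) ℤ) :
    (∀ l : List ℤ, l ≠ [] → (∀ x ∈ l, 0 < x) →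
      Mprod l = (M : Matrix (Fin 2) (Fin 2) ℤ) →
      ∀ j : ℕ, Mprod (l.rotate j) = (M : Matrix (Fin 2) (Fin 2) ℤ)) ↔
    (M = 1 ∨ M = -1) := by
  constructor
  · intro H
    obtain ⟨l, hpos, hl⟩ := Qpos_all M
    set P : Matrix (Fin 2) (Fin 2) ℤ := (M : Matrix (Fin 2) (Fin 2) ℤ) with hP
    have hdet : P.det = 1 := M.2
    have comm : ∀ (aa : ℤ) (w : List ℤ), 0 < aa → (∀ x ∈ w, 0 < x) →
        Mprod (aa :: w) = 1 → P * genMat aa = genMat aa * P := by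
      intro aa w haa hw hprod
      set L := l ++ (aa :: w) with hL
      have hLprod : Mprod L = P := by rw [hL, Mprod_append, hprod, one_mul, hl]
      have hLpos : ∀ x ∈ L, 0 < x := by
        intro x hx
        rcases List.mem_append.1 hx with h | h
        · exact hpos x h
        · rcases List.mem_cons.1 h with rfl | h
          · exact haa
          · exact hw x h
      have hLne : L ≠ [] := by simp [hL]
      have hrot := H L hLne hLpos hLprod (l.length + 1)
      have hj : l.length + 1 ≤ L.length := by
        rw [hL, List.length_append, List.length_cons]; omega
      have hid := Mprod_rotate L (l.length + 1) hj
      have htake : L.take (l.length + 1) = l ++ [aa] := by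
        rw [hL, List.take_append]
        simp
      rw [hrot, hLprod, htake, Mprod_append, Mprod_singleton, hl] at hid
      rw [← mul_assoc] at hid
      exact cancel_right hdet hid
    have c1 := comm 1 [1,1,1,1,1] one_pos (by decide) (by decide)
    have c2 := comm 2 [1,1,1,1,2,1] two_pos (by decide) (by decide)
    have h11 := congrFun (congrFun c1 1) 1
    have h10 := congrFun (congrFun c1 1) 0
    have h01 := congrFun (congrFun c1 0) 1
    have h10' := congrFun (congrFun c2 1) 0
    simp [genMat, Matrix.mul_apply, Fin.sum_univ_two] at h11 h10 h01 h10'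
    rw [Matrix.det_fin_two] at hdet
    have hr : P 1 0 = 0 := by omega
    have hq : P 0 1 = 0 := by omega
    have hs : P 1 1 = P 0 0 := by omega
    rw [hq, hr, hs] at hdet
    have hp2 : P 0 0 * P 0 0 = 1 := by linarith
    rcases mul_self_eq_one_iff.1 hp2 with hp1 | hp1
    · left
      apply Subtype.ext
      show P = _
      rw [Matrix.SpecialLinearGroup.coe_one, Matrix.eta_fin_two P, hq, hr, hs, hp1]
      decide
    · right
      apply Subtype.ext
      show P = _
      rw [Matrix.SpecialLinearGroup.coe_neg, Matrix.SpecialLinearGroup.coe_one,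
        Matrix.eta_fin_two P, hq, hr, hs, hp1]
      decide
  · rintro (rfl | rfl) l hne hpos hl j <;>
    · rw [← List.rotate_mod]
      have hlen : 0 < l.length := List.length_pos_iff.2 hne
      have hj : j % l.length ≤ l.length := (Nat.mod_lt _ hlen).le
      have hid := Mprod_rotate l (j % l.length) hj
      rw [hl] at hid
      apply cancel_right (Mprod_det (l.take (j % l.length)))
      rw [hid]
      simp
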